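/- Let κ : [0, L] → R be a smooth L-periodic function that is not identically zero. Then there exists c > 0 such that for all L-periodic u ∈ H^1((0,L)), ‖u'‖²_{L^2((0,L))} + (1/2)‖κ u‖²_{L^2((0,L))} ≥ c‖u‖²_{L^2((0,L))}. -/

import Mathlib

open intervalIntegral MeasureTheory

/-- Poincaré-type inequality: if `κ` is smooth, `L`-periodic and not identically zero, then
there is `c > 0` with `‖u'‖² + ½‖κu‖² ≥ c‖u‖²` (L² norms on `(0,L)`) for all `L`-periodic
`u ∈ H¹((0,L))` (represented by `C¹` periodic functions, dense in `H¹_p`). -/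
theorem poincare_kappa (L : ℝ) (hL : 0 < L) (κ : ℝ → ℝ)
    (hκ : ContDiff ℝ (⊤ : ℕ∞) κ) (hκper : Function.Periodic κ L)
    (hκnz : ∃ s ∈ Set.Icc (0 : ℝ) L, κ s ≠ 0) :
    ∃ c > 0, ∀ u : ℝ → ℝ, ContDiff ℝ 1 u → Function.Periodic u L →
      c * ∫ s in (0 : ℝ)..L, (u s) ^ 2 ≤
        (∫ s in (0 : ℝ)..L, (deriv u s) ^ 2) +
          (1 / 2) * ∫ s in (0 : ℝ)..L, (κ s * u s) ^ 2 := by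
  have hκc : Continuous κ := hκ.continuous
  -- find s₀ ∈ [0, L) with κ s₀ ≠ 0
  obtain ⟨s₀, hs₀0, hs₀L, hs₀ne⟩ : ∃ s₀, 0 ≤ s₀ ∧ s₀ < L ∧ κ s₀ ≠ 0 := by
    obtain ⟨s, hs, hne⟩ := hκnz
    rcases eq_or_lt_of_le hs.2 with h | h
    · refine ⟨0, le_rfl, hL, ?_⟩
      have h0 := hκper 0
      rw [zero_add] at h0
      rw [h] at hne
      rwa [← h0]
    · exact ⟨s, hs.1, h, hne⟩
  set δ2 : ℝ := κ s₀ ^ 2 / 2 with hδ2def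
  have hδ2pos : 0 < δ2 := by positivity
  -- find a small interval [a,b] ⊆ [0,L], a < b, with κ² ≥ δ2 there
  obtain ⟨a, b, hab, ha0, hbL, hκab⟩ :
      ∃ a b : ℝ, a < b ∧ 0 ≤ a ∧ b ≤ L ∧ ∀ t ∈ Set.Icc a b, δ2 ≤ κ t ^ 2 := by
    have hcont : ContinuousAt (fun s => κ s ^ 2) s₀ := (hκc.pow 2).continuousAt
    have hgt : δ2 < κ s₀ ^ 2 := by
      have hp : 0 < κ s₀ ^ 2 := by positivity
      rw [hδ2def]; linarith
    have hev := continuousAt_const.eventually_lt hcont hgt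
    obtain ⟨ε, hε, hball⟩ := Metric.eventually_nhds_iff.mp hev
    refine ⟨s₀, min (s₀ + ε / 2) L, ?_, hs₀0, min_le_right _ _, ?_⟩
    · exact lt_min (by linarith) hs₀L
    · intro t ht
      apply le_of_lt
      apply hball
      have h1 : t ≤ s₀ + ε / 2 := le_trans ht.2 (min_le_left _ _)
      have h2 : s₀ ≤ t := ht.1
      rw [Real.dist_eq, abs_lt]
      constructor <;> linarith
  -- the constant
  set P : ℝ := δ2 * (b - a) with hPdef
  have hP : 0 < P := mul_pos hδ2pos (by linarith)
  set A : ℝ := (b - a) * δ2 / (4 * L) with hAdef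
  set B : ℝ := 1 / (4 * L ^ 2) with hBdef
  have hApos : 0 < A := div_pos (mul_pos (by linarith) hδ2pos) (by linarith)
  have hBpos : 0 < B := by positivity
  refine ⟨min A B, lt_min hApos hBpos, ?_⟩
  intro u hu huper
  set c : ℝ := min A B with hcdef
  have hc0 : 0 ≤ c := le_of_lt (lt_min hApos hBpos)
  have hcA : c ≤ A := min_le_left _ _
  have hcB : c ≤ B := min_le_right _ _
  set D : ℝ → ℝ := deriv u with hDdef
  have huc : Continuous u := hu.continuous
  have hDc : Continuous D := hu.continuous_deriv le_rfl
  set J : ℝ := ∫ s in (0:ℝ)..L, u s ^ 2 with hJdef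
  set K : ℝ := ∫ s in (0:ℝ)..L, (κ s * u s) ^ 2 with hKdef
  set I : ℝ := ∫ s in (0:ℝ)..L, D s ^ 2 with hIdef
  set M : ℝ := ∫ s in (0:ℝ)..L, |2 * u s * D s| with hMdef
  have hJ0 : 0 ≤ J := intervalIntegral.integral_nonneg hL.le (fun x _ => by positivity)
  have hK0 : 0 ≤ K := intervalIntegral.integral_nonneg hL.le (fun x _ => by positivity)
  have hI0 : 0 ≤ I := intervalIntegral.integral_nonneg hL.le (fun x _ => by positivity)
  have hMc : Continuous fun s => |2 * u s * D s| :=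
    ((continuous_const.mul huc).mul hDc).abs
  have hu2c : Continuous fun s => u s ^ 2 := huc.pow 2
  have hκu2c : Continuous fun s => (κ s * u s) ^ 2 := (hκc.mul huc).pow 2
  -- Step 1: for s, t ∈ [0,L] : u s ^ 2 ≤ u t ^ 2 + M
  have step1 : ∀ s ∈ Set.Icc (0:ℝ) L, ∀ t ∈ Set.Icc (0:ℝ) L, u s ^ 2 ≤ u t ^ 2 + M := by
    intro s hs t ht
    have hderiv : ∀ x ∈ Set.uIcc t s, HasDerivAt (fun r => u r ^ 2) (2 * u x * D x) x := by
      intro x _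
      have h := (hu.differentiable one_ne_zero x).hasDerivAt
      exact (h.pow 2).congr_deriv (by rw [hDdef]; norm_num)
    have hint : IntervalIntegrable (fun r => 2 * u r * D r) volume t s :=
      ((continuous_const.mul huc).mul hDc).intervalIntegrable _ _
    have hftc : ∫ r in t..s, 2 * u r * D r = u s ^ 2 - u t ^ 2 :=
      intervalIntegral.integral_eq_sub_of_hasDerivAt hderiv hint
    have key : ∀ p q : ℝ, 0 ≤ p → p ≤ q → q ≤ L →
        |∫ r in p..q, 2 * u r * D r| ≤ M := by
      intro p q hp hpq hqL
      calc |∫ r in p..q, 2 * u r * D r| ≤ ∫ r in p..q, |2 * u r * D r| :=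
            intervalIntegral.abs_integral_le_integral_abs hpq
        _ ≤ M := intervalIntegral.integral_mono_interval hp hpq hqL
            (Filter.Eventually.of_forall fun x => abs_nonneg _)
            (hMc.intervalIntegrable _ _)
    have habs : u s ^ 2 - u t ^ 2 ≤ M := by
      rw [← hftc]
      rcases le_total t s with h | h
      · exact (le_abs_self _).trans (key t s ht.1 h hs.2)
      · calc ∫ r in t..s, 2 * u r * D r ≤ |∫ r in t..s, 2 * u r * D r| := le_abs_self _
          _ = |∫ r in s..t, 2 * u r * D r| := by
              rw [intervalIntegral.integral_symm, abs_neg]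
          _ ≤ M := key s t hs.1 h ht.2
    linarith
  -- Step 3 : δ2 * ∫_a^b u² ≤ K
  have step3 : δ2 * ∫ t in a..b, u t ^ 2 ≤ K := by
    calc δ2 * ∫ t in a..b, u t ^ 2 = ∫ t in a..b, δ2 * u t ^ 2 := by
          rw [intervalIntegral.integral_const_mul]
      _ ≤ ∫ t in a..b, (κ t * u t) ^ 2 := by
          apply intervalIntegral.integral_mono_on hab.le
            ((continuous_const.mul hu2c).intervalIntegrable _ _)
            (hκu2c.intervalIntegrable _ _)
          intro t ht
          rw [mul_pow]
          exact mul_le_mul_of_nonneg_right (hκab t ht) (sq_nonneg _)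
      _ ≤ K := intervalIntegral.integral_mono_interval ha0 hab.le hbL
          (Filter.Eventually.of_forall fun x => by positivity)
          (hκu2c.intervalIntegrable _ _)
  -- Step 2 : pointwise bound after averaging over [a,b]
  have step2 : ∀ s ∈ Set.Icc (0:ℝ) L, P * u s ^ 2 ≤ K + P * M := by
    intro s hs
    have hint : (b - a) * u s ^ 2 ≤ (∫ t in a..b, u t ^ 2) + (b - a) * M := by
      have hmono : (∫ t in a..b, u s ^ 2) ≤ ∫ t in a..b, (u t ^ 2 + M) := by
        apply intervalIntegral.integral_mono_on hab.le
          (intervalIntegrable_const)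
          ((hu2c.add continuous_const).intervalIntegrable _ _)
        intro t ht
        exact step1 s hs t ⟨le_trans ha0 ht.1, le_trans ht.2 hbL⟩
      rw [intervalIntegral.integral_const, smul_eq_mul,
        intervalIntegral.integral_add (hu2c.intervalIntegrable _ _) intervalIntegrable_const,
        intervalIntegral.integral_const, smul_eq_mul] at hmono
      linarith
    have h2 : δ2 * ((b - a) * u s ^ 2) ≤ δ2 * ((∫ t in a..b, u t ^ 2) + (b - a) * M) :=
      mul_le_mul_of_nonneg_left hint hδ2pos.le
    rw [hPdef]
    linarith [h2, step3]
  -- Step 4 : integrate over s ∈ [0,L]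
  have step4 : P * J ≤ L * (K + P * M) := by
    have hmono : (∫ s in (0:ℝ)..L, P * u s ^ 2) ≤ ∫ s in (0:ℝ)..L, (K + P * M) := by
      apply intervalIntegral.integral_mono_on hL.le
        ((continuous_const.mul hu2c).intervalIntegrable _ _)
        intervalIntegrable_const
      exact step2
    rw [intervalIntegral.integral_const_mul, intervalIntegral.integral_const,
      smul_eq_mul, sub_zero] at hmono
    exact hmono
  -- Step 5 : 2L·M ≤ J + 4L²·I
  have step5 : 2 * L * M ≤ J + 4 * L ^ 2 * I := by
    have hmono : (∫ s in (0:ℝ)..L, 2 * L * |2 * u s * D s|) ≤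
        ∫ s in (0:ℝ)..L, (u s ^ 2 + 4 * L ^ 2 * D s ^ 2) := by
      apply intervalIntegral.integral_mono_on hL.le
        ((continuous_const.mul hMc).intervalIntegrable _ _)
        ((hu2c.add (continuous_const.mul (hDc.pow 2))).intervalIntegrable _ _)
      intro s _
      show 2 * L * |2 * u s * D s| ≤ u s ^ 2 + 4 * L ^ 2 * D s ^ 2
      have h1 : |2 * u s * D s| = 2 * |u s| * |D s| := by
        rw [abs_mul, abs_mul]; simp [abs_of_nonneg]
      have h2 : u s ^ 2 = |u s| ^ 2 := (sq_abs _).symm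
      have h3 : D s ^ 2 = |D s| ^ 2 := (sq_abs _).symm
      rw [h1, h2, h3]
      have hh := sq_nonneg (|u s| - 2 * L * |D s|)
      have hexp : (|u s| - 2 * L * |D s|) ^ 2 =
          |u s| ^ 2 - 4 * L * (|u s| * |D s|) + 4 * L ^ 2 * |D s| ^ 2 := by ring
      rw [hexp] at hh
      linarith
    rw [intervalIntegral.integral_const_mul,
      intervalIntegral.integral_add (f := fun s => u s ^ 2) (g := fun s => 4 * L ^ 2 * D s ^ 2)
        (hu2c.intervalIntegrable _ _)
        ((continuous_const.mul (hDc.pow 2)).intervalIntegrable _ _),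
      intervalIntegral.integral_const_mul] at hmono
    exact hmono
  clear_value J K I M
  -- Combine: P * J ≤ 2 * L * K + 4 * L ^ 2 * P * I
  have hstar : P * J ≤ 2 * L * K + 4 * L ^ 2 * P * I := by
    linarith [step4, mul_le_mul_of_nonneg_left step5 hP.le]
  -- coefficient facts
  have hA2 : A * (2 * L) = P / 2 := by
    rw [hAdef, hPdef]; field_simp; ring
  have hB2 : B * (4 * L ^ 2) = 1 := by
    rw [hBdef]; field_simp
  have h1 : c * (2 * L) ≤ P / 2 := by
    calc c * (2 * L) ≤ A * (2 * L) := mul_le_mul_of_nonneg_right hcA (by linarith)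
      _ = P / 2 := hA2
  have h2 : c * (4 * L ^ 2) ≤ 1 := by
    calc c * (4 * L ^ 2) ≤ B * (4 * L ^ 2) := mul_le_mul_of_nonneg_right hcB (by positivity)
      _ = 1 := hB2
  clear_value c P A B δ2
  have hmain : P * (c * J) ≤ P * (I + 1 / 2 * K) := by
    linarith [mul_le_mul_of_nonneg_left hstar hc0,
      mul_le_mul_of_nonneg_right h1 hK0,
      mul_le_mul_of_nonneg_right h2 (mul_nonneg hP.le hI0)]
  exact le_of_mul_le_mul_left hmain hP
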